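/- Let (G,σ) be a 2-edge-connected signed graph whose signature attains the minimum number of negative edges among equivalent signatures. If F is a family of circuits of (G,σ) such that every negative edge lies on a cycle of some circuit in F, then F covers every cutedge of the positive subgraph G⁺ = G \ E⁻(G,σ). -/

import Mathlib

open SimpleGraph

open scoped Classical

variable {V : Type*} [Fintype V] [DecidableEq V]

/-- Number of negative edges (w.r.t. signature `σ`, `true` = negative) in a set of edges. -/
noncomputable def negCount (σ : Sym2 V → Bool) (s : Set (Sym2 V)) : ℕ :=
  {e ∈ s | σ e = true}.ncard

/-- A subgraph is a cycle: connected and 2-regular (on its vertex set). -/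
def SubIsCycle (G : SimpleGraph V) (C : G.Subgraph) : Prop :=
  C.Connected ∧ ∀ v ∈ C.verts, (C.neighborSet v).ncard = 2

/-- A positive cycle: a cycle with an even number of negative edges. -/
def IsPosCycle (G : SimpleGraph V) (σ : Sym2 V → Bool) (C : G.Subgraph) : Prop :=
  SubIsCycle G C ∧ Even (negCount σ C.edgeSet)

/-- A negative cycle: a cycle with an odd number of negative edges. -/
def IsNegCycle (G : SimpleGraph V) (σ : Sym2 V → Bool) (C : G.Subgraph) : Prop :=
  SubIsCycle G C ∧ Odd (negCount σ C.edgeSet)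

/-- A subgraph is a path from `u` to `v` (possibly of length zero). -/
def IsPathSub (G : SimpleGraph V) (P : G.Subgraph) (u v : V) : Prop :=
  ∃ w : G.Walk u v, w.IsPath ∧ P = w.toSubgraph

/-- A barbell: two edge-disjoint negative cycles joined by a path (possibly of length zero). -/
def IsBarbell (G : SimpleGraph V) (σ : Sym2 V → Bool) (B : G.Subgraph) : Prop :=
  ∃ C₁ C₂ P : G.Subgraph, IsNegCycle G σ C₁ ∧ IsNegCycle G σ C₂ ∧
    C₁.edgeSet ∩ C₂.edgeSet = ∅ ∧
    (∃ u v : V, IsPathSub G P u v ∧ u ∈ C₁.verts ∧ v ∈ C₂.verts ∧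
      P.verts ∩ C₁.verts = {u} ∧ P.verts ∩ C₂.verts = {v}) ∧
    C₁.verts ∩ C₂.verts ⊆ P.verts ∧
    B = C₁ ⊔ C₂ ⊔ P

/-- A circuit of a signed graph: a positive cycle or a barbell. -/
def IsCircuit (G : SimpleGraph V) (σ : Sym2 V → Bool) (C : G.Subgraph) : Prop :=
  IsPosCycle G σ C ∨ IsBarbell G σ C

/-- Total length (number of edges, with multiplicity) of a family of subgraphs. -/
noncomputable def coverLen (G : SimpleGraph V) (F : Multiset G.Subgraph) : ℕ :=
  (F.map fun C => C.edgeSet.ncard).sum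

/-- A circuit cover: a family of circuits covering all edges of the graph. -/
def IsCircuitCover (G : SimpleGraph V) (σ : Sym2 V → Bool) (F : Multiset G.Subgraph) : Prop :=
  (∀ C ∈ F, IsCircuit G σ C) ∧ ∀ e ∈ G.edgeSet, ∃ C ∈ F, e ∈ C.edgeSet

/-- The length of a shortest circuit cover. -/
noncomputable def scc (G : SimpleGraph V) (σ : Sym2 V → Bool) : ℕ :=
  sInf {n | ∃ F : Multiset G.Subgraph, IsCircuitCover G σ F ∧ coverLen G F = n}

/-- An edge crosses the cut determined by a vertex set `X`. -/
def crossesCut (X : Set V) (e : Sym2 V) : Prop :=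
  ∃ u v : V, e = s(u, v) ∧ (u ∈ X ↔ v ∉ X)

/-- The edge cut of `G` determined by the vertex set `X`. -/
def cutEdges (G : SimpleGraph V) (X : Set V) : Set (Sym2 V) :=
  {e ∈ G.edgeSet | crossesCut X e}

/-- Two signatures are (switching) equivalent: they differ exactly on an edge cut. -/
def SwitchEquiv (G : SimpleGraph V) (σ σ' : Sym2 V → Bool) : Prop :=
  ∃ X : Set V, ∀ e ∈ G.edgeSet,
    (crossesCut X e → σ' e = !σ e) ∧ (¬crossesCut X e → σ' e = σ e)

/-- The negativeness: minimum number of negative edges over equivalent signatures. -/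
noncomputable def epsilonNeg (G : SimpleGraph V) (σ : Sym2 V → Bool) : ℕ :=
  sInf {n | ∃ σ' : Sym2 V → Bool, SwitchEquiv G σ σ' ∧ negCount σ' G.edgeSet = n}

/-- `σ` attains the minimum number of negative edges among equivalent signatures. -/
def MinSignature (G : SimpleGraph V) (σ : Sym2 V → Bool) : Prop :=
  negCount σ G.edgeSet = epsilonNeg G σ

/-- `G` is 2-edge-connected: connected and with no cutedge. -/
def TwoEdgeConnected (G : SimpleGraph V) : Prop :=
  G.Connected ∧ ∀ e ∈ G.edgeSet, (G.deleteEdges {e}).Connected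

/-- `G` is cubic (3-regular). -/
def IsCubic (G : SimpleGraph V) : Prop :=
  ∀ v : V, (G.neighborSet v).ncard = 3

/-- The positive subgraph `G⁺`: delete all negative edges. -/
def posSubgraph (G : SimpleGraph V) (σ : Sym2 V → Bool) : SimpleGraph V :=
  G.deleteEdges {e | σ e = true}

/-- Number of edges of `G`. -/
noncomputable def numEdges (G : SimpleGraph V) : ℕ := G.edgeSet.ncard

/-- A cycle-tree: connected, no degree-1 vertices, all cycles pairwise edge-disjoint. -/
def IsCycleTree (H : SimpleGraph V) : Prop :=
  H.Connected ∧ (∀ v : V, (H.neighborSet v).ncard ≠ 1) ∧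
    ∀ C₁ C₂ : H.Subgraph, SubIsCycle H C₁ → SubIsCycle H C₂ → C₁ ≠ C₂ →
      C₁.edgeSet ∩ C₂.edgeSet = ∅

/-- A signed cycle-tree: a cycle-tree in which every cycle has a negative edge. -/
def IsSignedCycleTree (H : SimpleGraph V) (σ : Sym2 V → Bool) : Prop :=
  IsCycleTree H ∧ ∀ C : H.Subgraph, SubIsCycle H C → 0 < negCount σ C.edgeSet

/-- A leaf-cycle of `H`: a cycle `D` attached to the rest of `H` through a single vertex `v`. -/
def IsLeafCycle (H : SimpleGraph V) (D : H.Subgraph) : Prop :=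
  SubIsCycle H D ∧ ∃ v ∈ D.verts, ∀ e ∈ H.edgeSet,
    (∃ u : V, u ∈ e ∧ u ∈ D.verts ∧ u ≠ v) → e ∈ D.edgeSet

/-- A subgraph `N` of `G` is a cycle-tree. -/
def IsCycleTreeSub (G : SimpleGraph V) (N : G.Subgraph) : Prop :=
  N.Connected ∧ (∀ v ∈ N.verts, (N.neighborSet v).ncard ≠ 1) ∧
    ∀ C₁ C₂ : G.Subgraph, C₁ ≤ N → C₂ ≤ N → SubIsCycle G C₁ → SubIsCycle G C₂ →
      C₁ ≠ C₂ → C₁.edgeSet ∩ C₂.edgeSet = ∅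

/-- A leaf-cycle of a cycle-tree subgraph `N`. -/
def IsLeafCycleOf (G : SimpleGraph V) (N D : G.Subgraph) : Prop :=
  D ≤ N ∧ SubIsCycle G D ∧ ∃ v ∈ D.verts, ∀ e ∈ N.edgeSet,
    (∃ u : V, u ∈ e ∧ u ∈ D.verts ∧ u ≠ v) → e ∈ D.edgeSet

/-- The signed girth: minimum length of a circuit containing a negative edge. -/
noncomputable def signedGirth (G : SimpleGraph V) (σ : Sym2 V → Bool) : ℕ :=
  sInf {n | ∃ C : G.Subgraph, IsCircuit G σ C ∧ 0 < negCount σ C.edgeSet ∧ C.edgeSet.ncard = n}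

section Aux

/-- In a subgraph in which every vertex has degree 2, the number of edges crossing any cut
is even. -/
lemma even_cross_ncard (G : SimpleGraph V) (D : G.Subgraph) (X : Set V)
    (hreg : ∀ v ∈ D.verts, (D.neighborSet v).ncard = 2) :
    Even {g ∈ D.edgeSet | crossesCut X g}.ncard := by
  classical
  letI : LinearOrder V := LinearOrder.lift' (Fintype.equivFin V) (Fintype.equivFin V).injective
  set A : Finset (V × V) := Finset.univ.filter (fun p => D.Adj p.1 p.2 ∧ p.1 ∈ X) with hA
  set B : Finset (V × V) :=
    Finset.univ.filter (fun p => D.Adj p.1 p.2 ∧ p.1 ∈ X ∧ p.2 ∈ X) with hB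
  set T : Finset (V × V) :=
    Finset.univ.filter (fun p => D.Adj p.1 p.2 ∧ p.1 ∈ X ∧ p.2 ∉ X) with hT
  have hAcard : Even A.card := by
    rw [Finset.card_eq_sum_card_fiberwise (f := Prod.fst) (t := Finset.univ)
      (fun p _ => Finset.mem_univ _)]
    apply Finset.even_sum
    intro u _
    by_cases hu : u ∈ X ∧ u ∈ D.verts
    · have hc : (A.filter fun p => p.1 = u).card = (D.neighborSet u).toFinset.card := by
        apply Finset.card_bij (fun p _ => p.2)
        · intro p hp
          simp only [hA, Finset.mem_filter, Finset.mem_univ, true_and] at hp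
          obtain ⟨⟨hadj, _⟩, h1⟩ := hp
          simp only [Set.mem_toFinset, SimpleGraph.Subgraph.mem_neighborSet]
          exact h1 ▸ hadj
        · intro p₁ h₁ p₂ h₂ heq
          simp only [hA, Finset.mem_filter, Finset.mem_univ, true_and] at h₁ h₂
          exact Prod.ext (h₁.2.trans h₂.2.symm) heq
        · intro v hv
          simp only [Set.mem_toFinset, SimpleGraph.Subgraph.mem_neighborSet] at hv
          exact ⟨(u, v), by simp [hA, hv, hu.1], rfl⟩
      rw [hc, ← Set.ncard_eq_toFinset_card', hreg u hu.2]
      exact even_two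
    · have hc : (A.filter fun p => p.1 = u) = ∅ := by
        ext p
        simp only [hA, Finset.mem_filter, Finset.mem_univ, true_and, Finset.notMem_empty,
          iff_false, not_and]
        rintro ⟨hadj, hx⟩ rfl
        exact hu ⟨hx, hadj.fst_mem⟩
      rw [hc]
      exact Even.zero
  have hBcard : Even B.card := by
    have hsplit := Finset.card_filter_add_card_filter_not
      (s := B) (p := fun p => p.1 < p.2)
    have hbij : (B.filter fun p => p.1 < p.2).card = (B.filter fun p => ¬p.1 < p.2).card := by
      apply Finset.card_bij (fun p _ => (p.2, p.1))
      · intro p hp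
        simp only [hB, Finset.mem_filter, Finset.mem_univ, true_and] at hp ⊢
        exact ⟨⟨hp.1.1.symm, hp.1.2.2, hp.1.2.1⟩, not_lt_of_gt hp.2⟩
      · intro p₁ _ p₂ _ heq
        exact Prod.ext (congrArg Prod.snd heq) (congrArg Prod.fst heq)
      · intro p hp
        simp only [hB, Finset.mem_filter, Finset.mem_univ, true_and] at hp
        have hne : p.1 ≠ p.2 := (D.adj_sub hp.1.1).ne
        have hlt : p.2 < p.1 := (hp.2 |> not_lt.mp).lt_of_ne (fun h => hne h.symm)
        exact ⟨(p.2, p.1), by simp [hB, Finset.mem_filter, hp.1.1.symm, hp.1.2.1, hp.1.2.2, hlt],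
          rfl⟩
    rw [← hsplit, ← hbij]
    exact ⟨(B.filter fun p => p.1 < p.2).card, rfl⟩
  have hABT : A.card = B.card + T.card := by
    have h1 : A.filter (fun p => p.2 ∈ X) = B := by
      ext p; simp only [hA, hB, Finset.mem_filter, Finset.mem_univ, true_and]; tauto
    have h2 : A.filter (fun p => ¬p.2 ∈ X) = T := by
      ext p; simp only [hA, hT, Finset.mem_filter, Finset.mem_univ, true_and]; tauto
    rw [← h1, ← h2]
    exact (Finset.card_filter_add_card_filter_not (p := fun p : V × V => p.2 ∈ X)).symm
  have hTcard : Even T.card := by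
    rw [hABT, Nat.even_add] at hAcard
    exact hAcard.mp hBcard
  have hfin : Even {g ∈ D.edgeSet | crossesCut X g}.ncard := by
    have hcount : T.card = {g ∈ D.edgeSet | crossesCut X g}.ncard := by
      rw [Set.ncard_eq_toFinset_card']
      apply Finset.card_bij (fun p _ => s(p.1, p.2))
      · intro p hp
        simp only [hT, Finset.mem_filter, Finset.mem_univ, true_and] at hp
        simp only [Set.mem_toFinset, Set.mem_setOf_eq, Set.sep_setOf]
        exact ⟨SimpleGraph.Subgraph.mem_edgeSet.mpr hp.1,
          ⟨p.1, p.2, rfl, iff_of_true hp.2.1 hp.2.2⟩⟩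
      · intro p₁ h₁ p₂ h₂ heq
        simp only [hT, Finset.mem_filter, Finset.mem_univ, true_and] at h₁ h₂
        rcases Sym2.eq_iff.mp heq with ⟨ha, hb⟩ | ⟨ha, hb⟩
        · exact Prod.ext ha hb
        · exact absurd (ha ▸ h₁.2.1) h₂.2.2
      · intro g hg
        simp only [Set.mem_toFinset, Set.sep_setOf, Set.mem_setOf_eq] at hg
        obtain ⟨hgD, x, y, hgxy, hiff⟩ := hg
        have hadj : D.Adj x y := SimpleGraph.Subgraph.mem_edgeSet.mp (hgxy ▸ hgD)
        by_cases hx : x ∈ X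
        · exact ⟨(x, y), by simp [hT, hadj, hx, hiff.mp hx], hgxy.symm⟩
        · have hy : y ∈ X := by
            by_contra hy
            exact hx (hiff.mpr hy)
          have hxn : x ∉ X := hx
          exact ⟨(y, x), by simp [hT, hadj.symm, hy, fun h => hxn (by simpa using h)],
            by rw [Sym2.eq_swap]; exact hgxy.symm⟩
    rwa [hcount] at hTcard
  exact hfin

lemma mem_of_even_pair {S : Set (Sym2 V)} {e f : Sym2 V} (hS : S ⊆ {e, f}) (hf : f ∈ S)
    (hef : e ≠ f) (hev : Even S.ncard) : e ∈ S := by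
  by_contra he
  have hSf : S = {f} := by
    apply Set.eq_singleton_iff_unique_mem.mpr ⟨hf, fun g hg => ?_⟩
    rcases hS hg with h | h
    · exact absurd (h ▸ hg) he
    · exact h
  rw [hSf, Set.ncard_singleton] at hev
  exact (Nat.not_even_iff_odd.mpr odd_one) hev

end Aux

theorem stmt_7 (G : SimpleGraph V) (σ : Sym2 V → Bool)
    (h2ec : TwoEdgeConnected G) (hmin : MinSignature G σ)
    (F : Multiset G.Subgraph) (hcirc : ∀ C ∈ F, IsCircuit G σ C)
    (hneg : ∀ e ∈ G.edgeSet, σ e = true →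
      ∃ C ∈ F, ∃ D : G.Subgraph, D ≤ C ∧ SubIsCycle G D ∧ e ∈ D.edgeSet) :
    ∀ e : Sym2 V, (posSubgraph G σ).IsBridge e → ∃ C ∈ F, e ∈ C.edgeSet := by
  classical
  intro e
  induction e using Sym2.ind with
  | _ u v =>
  intro hbridge
  rw [SimpleGraph.isBridge_iff] at hbridge
  have hnreach : ¬ ((posSubgraph G σ) \ SimpleGraph.fromEdgeSet {s(u, v)}).Reachable u v :=
    hbridge
  have hadj : (posSubgraph G σ).Adj u v := by
    by_contra hna
    set X : Set V :=
      {w | ((posSubgraph G σ) \ SimpleGraph.fromEdgeSet {s(u, v)}).Reachable u w} with hX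
    have huX : u ∈ X := SimpleGraph.Reachable.refl u
    have hvX : v ∉ X := hnreach
    have hpos : ∀ g, g ∈ G.edgeSet → crossesCut X g → σ g = false → False := by
      intro g hgE hgX hgσ
      obtain ⟨a, b, hg, hiff⟩ := hgX
      have hGab : G.Adj a b := (SimpleGraph.mem_edgeSet G).mp (hg ▸ hgE)
      have hposadj : (posSubgraph G σ).Adj a b := by
        simp only [posSubgraph, SimpleGraph.deleteEdges_adj, Set.mem_setOf_eq]
        exact ⟨hGab, by rw [← hg, hgσ]; simp⟩
      have hne : g ≠ s(u, v) := by
        intro hgu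
        exact hna (by rw [← SimpleGraph.mem_edgeSet, ← hgu, hg]; exact hposadj)
      have hH'adj : ((posSubgraph G σ) \ SimpleGraph.fromEdgeSet {s(u, v)}).Adj a b := by
        rw [SimpleGraph.sdiff_adj]
        refine ⟨hposadj, ?_⟩
        rw [SimpleGraph.fromEdgeSet_adj]
        rintro ⟨hmem, -⟩
        exact hne (hg.trans (Set.mem_singleton_iff.mp hmem))
      by_cases ha : a ∈ X
      · exact (hiff.mp ha) (Set.mem_setOf_eq ▸ (ha.trans hH'adj.reachable))
      · have hb : b ∈ X := by
          by_contra hb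
          exact ha (hiff.mpr hb)
        exact ha (Set.mem_setOf_eq ▸ (hb.trans hH'adj.symm.reachable))
    set σ' : Sym2 V → Bool := fun g => if crossesCut X g then !σ g else σ g with hσ'
    have hequiv : SwitchEquiv G σ σ' :=
      ⟨X, fun g _ => ⟨fun h => if_pos h, fun h => if_neg h⟩⟩
    have hle : negCount σ G.edgeSet ≤ negCount σ' G.edgeSet := by
      have h1 : negCount σ G.edgeSet = epsilonNeg G σ := hmin
      rw [h1]
      exact Nat.sInf_le ⟨σ', hequiv, rfl⟩
    set N1 : Set (Sym2 V) := {g ∈ G.edgeSet | crossesCut X g ∧ σ g = true} with hN1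
    set N2 : Set (Sym2 V) := {g ∈ G.edgeSet | ¬crossesCut X g ∧ σ g = true} with hN2
    have hdisj12 : Disjoint N1 N2 := by
      rw [Set.disjoint_left]
      rintro g ⟨-, hc, -⟩ ⟨-, hnc, -⟩
      exact hnc hc
    have hcount1 : negCount σ G.edgeSet = N1.ncard + N2.ncard := by
      rw [← Set.ncard_union_eq hdisj12 (Set.toFinite _) (Set.toFinite _)]
      unfold negCount
      congr 1
      ext g
      simp only [hN1, hN2, Set.mem_union, Set.mem_setOf_eq, Set.sep_setOf]
      tauto
    have hcount2 : negCount σ' G.edgeSet = N2.ncard := by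
      unfold negCount
      congr 1
      ext g
      simp only [hN2, Set.mem_setOf_eq, Set.sep_setOf]
      by_cases hc : crossesCut X g
      · simp only [hσ', if_pos hc, Bool.not_eq_true']
        constructor
        · rintro ⟨hgE, hgσ⟩
          exact (hpos g hgE hc hgσ).elim
        · rintro ⟨-, hnc, -⟩
          exact (hnc hc).elim
      · simp only [hσ', if_neg hc]
        tauto
    have hN1pos : 0 < N1.ncard := by
      obtain ⟨p⟩ := h2ec.1.preconnected u v
      obtain ⟨d, _, hdf, hds⟩ := p.exists_boundary_dart X huX hvX
      have hdG : s(d.fst, d.snd) ∈ G.edgeSet := (SimpleGraph.mem_edgeSet G).mpr d.adj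
      have hdc : crossesCut X s(d.fst, d.snd) := ⟨d.fst, d.snd, rfl, iff_of_true hdf hds⟩
      refine (Set.ncard_pos (Set.toFinite _)).mpr ⟨s(d.fst, d.snd), hdG, hdc, ?_⟩
      cases h : σ s(d.fst, d.snd)
      · exact (hpos _ hdG hdc h).elim
      · rfl
    omega
  -- basic facts about the bridge edge
  have hadj' : G.Adj u v ∧ ¬s(u, v) ∈ {e | σ e = true} := by
    simpa [posSubgraph, SimpleGraph.deleteEdges_adj] using hadj
  have heG : s(u, v) ∈ G.edgeSet := hadj'.1
  have heσ : σ s(u, v) = false := by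
    have := hadj'.2
    simp only [Set.mem_setOf_eq] at this
    exact Bool.not_eq_true _ ▸ (by simpa using this)
  -- the cut
  set H' : SimpleGraph V := (posSubgraph G σ) \ SimpleGraph.fromEdgeSet {s(u, v)} with hH'
  set X : Set V := {w | H'.Reachable u w} with hX
  have huX : u ∈ X := SimpleGraph.Reachable.refl u
  have hvX : v ∉ X := hnreach
  -- every positive edge crossing the cut is the bridge itself
  have hpos : ∀ g, g ∈ G.edgeSet → crossesCut X g → σ g = false → g = s(u, v) := by
    intro g hgE hgX hgσ
    obtain ⟨a, b, hg, hiff⟩ := hgX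
    by_contra hne
    have hGab : G.Adj a b := (SimpleGraph.mem_edgeSet G).mp (hg ▸ hgE)
    have hposadj : (posSubgraph G σ).Adj a b := by
      simp only [posSubgraph, SimpleGraph.deleteEdges_adj, Set.mem_setOf_eq]
      exact ⟨hGab, by rw [← hg, hgσ]; simp⟩
    have hH'adj : H'.Adj a b := by
      rw [hH', SimpleGraph.sdiff_adj]
      refine ⟨hposadj, ?_⟩
      rw [SimpleGraph.fromEdgeSet_adj]
      rintro ⟨hmem, -⟩
      exact hne (hg.trans (Set.mem_singleton_iff.mp hmem))
    by_cases ha : a ∈ X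
    · exact (hiff.mp ha) (Set.mem_setOf_eq ▸ (ha.trans hH'adj.reachable))
    · have hb : b ∈ X := by
        by_contra hb
        exact ha (hiff.mpr hb)
      exact ha (Set.mem_setOf_eq ▸ (hb.trans hH'adj.symm.reachable))
  -- the switched signature
  set σ' : Sym2 V → Bool := fun g => if crossesCut X g then !σ g else σ g with hσ'
  have hequiv : SwitchEquiv G σ σ' :=
    ⟨X, fun g _ => ⟨fun h => if_pos h, fun h => if_neg h⟩⟩
  have hle : negCount σ G.edgeSet ≤ negCount σ' G.edgeSet := by
    have h1 : negCount σ G.edgeSet = epsilonNeg G σ := hmin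
    rw [h1]
    exact Nat.sInf_le ⟨σ', hequiv, rfl⟩
  -- counting
  set N1 : Set (Sym2 V) := {g ∈ G.edgeSet | crossesCut X g ∧ σ g = true} with hN1
  set N2 : Set (Sym2 V) := {g ∈ G.edgeSet | ¬crossesCut X g ∧ σ g = true} with hN2
  set P1 : Set (Sym2 V) := {g ∈ G.edgeSet | crossesCut X g ∧ σ g = false} with hP1
  have hdisj12 : Disjoint N1 N2 := by
    rw [Set.disjoint_left]
    rintro g ⟨-, hc, -⟩ ⟨-, hnc, -⟩
    exact hnc hc
  have hdisjP2 : Disjoint P1 N2 := by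
    rw [Set.disjoint_left]
    rintro g ⟨-, hc, -⟩ ⟨-, hnc, -⟩
    exact hnc hc
  have hcount1 : negCount σ G.edgeSet = N1.ncard + N2.ncard := by
    rw [← Set.ncard_union_eq hdisj12 (Set.toFinite _) (Set.toFinite _)]
    unfold negCount
    congr 1
    ext g
    simp only [hN1, hN2, Set.mem_union, Set.mem_setOf_eq, Set.sep_setOf]
    tauto
  have hcount2 : negCount σ' G.edgeSet = P1.ncard + N2.ncard := by
    rw [← Set.ncard_union_eq hdisjP2 (Set.toFinite _) (Set.toFinite _)]
    unfold negCount
    congr 1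
    ext g
    simp only [hP1, hN2, Set.mem_union, Set.mem_setOf_eq, Set.sep_setOf]
    by_cases hc : crossesCut X g
    · simp only [hσ', if_pos hc, Bool.not_eq_true']
      tauto
    · simp only [hσ', if_neg hc]
      tauto
  have hP1e : P1 = {s(u, v)} := by
    ext g
    simp only [hP1, Set.mem_setOf_eq, Set.mem_singleton_iff, Set.sep_setOf]
    constructor
    · rintro ⟨hgE, hgc, hgσ⟩
      exact hpos g hgE hgc hgσ
    · rintro rfl
      exact ⟨heG, ⟨u, v, rfl, iff_of_true huX hvX⟩, heσ⟩
  have hN1le : N1.ncard ≤ 1 := by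
    have := hcount1 ▸ hcount2 ▸ hle
    rw [hP1e, Set.ncard_singleton] at this
    omega
  -- there is a negative edge in the cut
  have hfex : ∃ f, f ∈ N1 := by
    have hconn : (G.deleteEdges {s(u, v)}).Connected := h2ec.2 _ heG
    obtain ⟨p⟩ := hconn.preconnected u v
    obtain ⟨d, _, hdf, hds⟩ := p.exists_boundary_dart X huX hvX
    have hdadj : G.Adj d.fst d.snd ∧ ¬s(d.fst, d.snd) ∈ ({s(u, v)} : Set (Sym2 V)) := by
      simpa [SimpleGraph.deleteEdges_adj] using d.adj
    refine ⟨s(d.fst, d.snd), (SimpleGraph.mem_edgeSet G).mpr hdadj.1,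
      ⟨d.fst, d.snd, rfl, iff_of_true hdf hds⟩, ?_⟩
    by_contra hσd
    have hσd' : σ s(d.fst, d.snd) = false := by
      cases h : σ s(d.fst, d.snd)
      · rfl
      · exact absurd h hσd
    exact hdadj.2 (Set.mem_singleton_iff.mpr
      (hpos _ ((SimpleGraph.mem_edgeSet G).mpr hdadj.1) ⟨d.fst, d.snd, rfl, iff_of_true hdf hds⟩ hσd'))
  obtain ⟨f, hfN1⟩ := hfex
  have hN1f : ∀ g ∈ N1, g = f := by
    intro g hg
    exact (Set.ncard_le_one (Set.toFinite _)).mp hN1le g hg f hfN1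
  obtain ⟨hfG, hfc, hfσ⟩ := hfN1
  -- the bridge is distinct from the negative edge
  have hef : s(u, v) ≠ f := by
    intro h
    rw [← h] at hfσ
    rw [heσ] at hfσ
    exact Bool.false_ne_true hfσ
  -- the negative edge lies on a cycle of a circuit of F
  obtain ⟨C, hCF, D, hDC, hDcyc, hfD⟩ := hneg f hfG hfσ
  -- parity of crossing edges of the cycle
  have heven := even_cross_ncard G D X hDcyc.2
  have hSsub : {g ∈ D.edgeSet | crossesCut X g} ⊆ {s(u, v), f} := by
    rintro g ⟨hgD, hgc⟩
    have hgG : g ∈ G.edgeSet := D.edgeSet_subset hgD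
    cases h : σ g
    · exact Or.inl (hpos g hgG hgc h)
    · exact Or.inr (hN1f g ⟨hgG, hgc, h⟩)
  have hfS : f ∈ {g ∈ D.edgeSet | crossesCut X g} := ⟨hfD, hfc⟩
  have heS := mem_of_even_pair hSsub hfS hef heven
  exact ⟨C, hCF, SimpleGraph.Subgraph.edgeSet_mono hDC heS.1⟩
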